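/- arXiv:2010.08723 — 2 statements merged into one kernel-verified Lean document; each statement's English description precedes it below -/
import Mathlib

section
/- Let C be a k-rectifiable Radon measure on ℝⁿ of the form ‖C‖ = θ H^k⌊Γ with θ ≥ 1 H^k-a.e. on the k-rectifiable set Γ, and suppose the density ratio ‖C‖(B_ρ(0))/ρ^k is equal to a constant θ₀ for all ρ > 0, and that the monotonicity identity 0 = ‖C‖(B_λ)/λ^k − ‖C‖(B_σ)/σ^k = ∫_{G_k(B_λ∖B_σ)} |P_{S^⊥}(x/|x|)|²/|x|^k dC(x,S) holds for all 0 < σ < λ (where C is regarded as the associated rectifiable varifold). Then for C-almost every (x,S) one has x ∈ S, i.e. C({(x,S) : P_S x ≠ x}) = 0. -/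
open MeasureTheory Metric Filter Set
open scoped ENNReal Topology MeasureTheory

noncomputable section

/-- For a rectifiable `k`-varifold `C` (here a Radon measure on `ℝⁿ × (ℝⁿ →L ℝⁿ)` where the
second component records the orthogonal projection onto the `k`-plane `S`) whose mass
`‖C‖ = θ H^k ⌊ Γ` has `θ ≥ 1` a.e., whose density ratios at `0` are constant, and which
satisfies the exact monotonicity identity (the cone integrand vanishes on every annulus),
the planes charged by `C` contain the radial direction: `C({(x,S) : P_S x ≠ x}) = 0`. -/
theorem stmt7 {n k : ℕ}
    (C : Measure ((EuclideanSpace ℝ (Fin n)) ×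
      ((EuclideanSpace ℝ (Fin n)) →L[ℝ] (EuclideanSpace ℝ (Fin n)))))
    [IsLocallyFiniteMeasure C]
    (Γ : Set (EuclideanSpace ℝ (Fin n))) (θ : EuclideanSpace ℝ (Fin n) → ℝ≥0∞)
    (hθ : ∀ᵐ x ∂((μH[(k : ℝ)]).restrict Γ), 1 ≤ θ x)
    (hmass : Measure.map Prod.fst C = ((μH[(k : ℝ)]).restrict Γ).withDensity θ)
    (θ₀ : ℝ≥0∞)
    (hconst : ∀ ρ : ℝ, 0 < ρ →
      (Measure.map Prod.fst C) (closedBall (0 : EuclideanSpace ℝ (Fin n)) ρ)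
        / ENNReal.ofReal (ρ ^ (k : ℝ)) = θ₀)
    (hmono : ∀ σ lam : ℝ, 0 < σ → σ < lam →
      (∫⁻ p in {p : (EuclideanSpace ℝ (Fin n)) ×
            ((EuclideanSpace ℝ (Fin n)) →L[ℝ] (EuclideanSpace ℝ (Fin n))) |
            p.1 ∈ closedBall (0 : EuclideanSpace ℝ (Fin n)) lam \ closedBall 0 σ},
        ENNReal.ofReal (‖p.1 - p.2 p.1‖ ^ 2 / ‖p.1‖ ^ ((k : ℝ) + 2)) ∂C) = 0) :
    C {p | p.2 p.1 ≠ p.1} = 0 := by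
  classical
  set E := EuclideanSpace ℝ (Fin n)
  set f : E × (E →L[ℝ] E) → ℝ≥0∞ :=
    fun p => ENNReal.ofReal (‖p.1 - p.2 p.1‖ ^ 2 / ‖p.1‖ ^ ((k : ℝ) + 2)) with hfdef
  have hcont : Continuous fun p : E × (E →L[ℝ] E) => p.2 p.1 :=
    continuous_snd.clm_apply continuous_fst
  have hmeas : Measurable f := by
    apply ENNReal.measurable_ofReal.comp
    exact (((continuous_fst.sub hcont).norm.pow 2).measurable).div
      ((continuous_fst.norm.rpow_const (fun p => Or.inr (by positivity))).measurable)
  set A : ℕ → Set (E × (E →L[ℝ] E)) := fun m =>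
    {p | p.1 ∈ closedBall (0 : E) ((m : ℝ) + 2) \ closedBall 0 (((m : ℝ) + 2)⁻¹)} with hAdef
  have hAmeas : ∀ m, MeasurableSet (A m) := fun m =>
    measurable_fst ((measurableSet_closedBall.diff measurableSet_closedBall))
  have hzero : ∀ m, C ({p | f p ≠ 0} ∩ A m) = 0 := by
    intro m
    have hσ : (0 : ℝ) < ((m : ℝ) + 2)⁻¹ := by positivity
    have hsl : ((m : ℝ) + 2)⁻¹ < (m : ℝ) + 2 := by
      have h1 : ((m : ℝ) + 2)⁻¹ ≤ 1 := by
        rw [inv_le_one_iff₀]; right; linarith [Nat.cast_nonneg (α := ℝ) m]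
      linarith [Nat.cast_nonneg (α := ℝ) m]
    have h0 := hmono (((m : ℝ) + 2)⁻¹) ((m : ℝ) + 2) hσ hsl
    have hae : f =ᵐ[C.restrict (A m)] 0 := by
      rw [← lintegral_eq_zero_iff hmeas]
      exact h0
    have h1 : ∀ᵐ p ∂(C.restrict (A m)), f p = 0 := hae
    have h2 := ae_iff.mp h1
    rwa [Measure.restrict_apply' (hAmeas m)] at h2
  have hsub : {p : E × (E →L[ℝ] E) | p.2 p.1 ≠ p.1} ⊆ ⋃ m, {p | f p ≠ 0} ∩ A m := by
    intro p hp
    have hx : p.1 ≠ 0 := by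
      intro h
      apply hp
      rw [h, map_zero]
    have hxpos : (0 : ℝ) < ‖p.1‖ := norm_pos_iff.mpr hx
    obtain ⟨m, hm⟩ := exists_nat_ge (max ‖p.1‖ (‖p.1‖)⁻¹)
    refine mem_iUnion.mpr ⟨m, ?_, ?_⟩
    · have hnum : (0 : ℝ) < ‖p.1 - p.2 p.1‖ ^ 2 := by
        have h : p.1 - p.2 p.1 ≠ 0 := sub_ne_zero.mpr (Ne.symm hp)
        exact pow_pos (norm_pos_iff.mpr h) 2
      have hden : (0 : ℝ) < ‖p.1‖ ^ ((k : ℝ) + 2) := Real.rpow_pos_of_pos hxpos _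
      simp only [hfdef, Set.mem_setOf_eq]
      exact (ENNReal.ofReal_pos.mpr (div_pos hnum hden)).ne'
    · have h1 : ‖p.1‖ ≤ (m : ℝ) + 2 := le_trans (le_trans (le_max_left _ _) hm) (by linarith)
      have h2 : ((m : ℝ) + 2)⁻¹ < ‖p.1‖ := by
        have : (‖p.1‖)⁻¹ ≤ (m : ℝ) := le_trans (le_max_right _ _) hm
        have h3 : (‖p.1‖)⁻¹ < (m : ℝ) + 2 := by linarith
        exact inv_lt_of_inv_lt₀ hxpos h3
      simp only [hAdef, Set.mem_setOf_eq, Set.mem_diff, mem_closedBall, dist_zero_right]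
      exact ⟨h1, fun hle => absurd hle (not_le.mpr h2)⟩
  have := measure_iUnion_null hzero (μ := C)
  exact le_antisymm (le_trans (measure_mono hsub) this.le) zero_le
end
end

section
/- Let μ_j be a sequence of positive Radon measures on ℝⁿ converging weakly* to μ, let x_j → x₀, and suppose for each j there is an increasing function φ_j with μ_j(B_r(x_j))/r^k ≤ μ_j(B_t(x_j))/t^k + φ_j(t) for 0 < r < t, and φ_j → 0 uniformly on a neighborhood of 0 as j → ∞ in the sense that sup_j φ_j(t) → 0 as t → 0. If additionally the densities Θ^k(μ_j, x_j) exist, then limsup_{j→∞} Θ^k(μ_j, x_j) ≤ Θ^k(μ, x₀) whenever Θ^k(μ, x₀) exists: the k-density is upper semicontinuous along such sequences. -/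
open MeasureTheory Metric Filter Set
open scoped ENNReal Topology

set_option maxHeartbeats 1000000

noncomputable section

/-- Upper semicontinuity of the `k`-density along a weakly* converging sequence of
measures with uniformly approximately monotone density ratios. -/
theorem stmt13 {n k : ℕ}
    (μseq : ℕ → Measure (EuclideanSpace ℝ (Fin n))) (μ : Measure (EuclideanSpace ℝ (Fin n)))
    [∀ j, IsLocallyFiniteMeasure (μseq j)] [IsLocallyFiniteMeasure μ]
    (hweak : ∀ f : EuclideanSpace ℝ (Fin n) → ℝ, Continuous f → HasCompactSupport f →
      Tendsto (fun j => ∫ y, f y ∂(μseq j)) atTop (𝓝 (∫ y, f y ∂μ)))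
    (x : ℕ → EuclideanSpace ℝ (Fin n)) (x₀ : EuclideanSpace ℝ (Fin n))
    (hx : Tendsto x atTop (𝓝 x₀))
    (φ : ℕ → ℝ → ℝ)
    (hφmono : ∀ j, Monotone (φ j)) (hφnn : ∀ j t, 0 ≤ φ j t)
    (hφunif : ∀ ε : ℝ, 0 < ε → ∃ δ > 0, ∀ j, ∀ t : ℝ, 0 < t → t < δ → φ j t ≤ ε)
    (hmonoid : ∀ j, ∀ r t : ℝ, 0 < r → r < t →
      μseq j (closedBall (x j) r) / ENNReal.ofReal (r ^ k)
        ≤ μseq j (closedBall (x j) t) / ENNReal.ofReal (t ^ k) + ENNReal.ofReal (φ j t))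
    (θ : ℕ → ℝ≥0∞) (θ₀ : ℝ≥0∞)
    (hθ : ∀ j, Tendsto (fun r : ℝ => μseq j (closedBall (x j) r) / ENNReal.ofReal (r ^ k))
      (𝓝[>] (0 : ℝ)) (𝓝 (θ j)))
    (hθ₀ : Tendsto (fun r : ℝ => μ (closedBall x₀ r) / ENNReal.ofReal (r ^ k))
      (𝓝[>] (0 : ℝ)) (𝓝 θ₀)) :
    Filter.limsup θ atTop ≤ θ₀ := by
  rcases eq_top_or_lt_top θ₀ with htop | hfin
  · simp [htop]
  have hθ₀ne : θ₀ ≠ ⊤ := hfin.ne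
  -- main claim
  have key : ∀ ε : ℝ, 0 < ε →
      limsup θ atTop ≤ (θ₀ + ENNReal.ofReal ε) * ENNReal.ofReal (1 + ε) + ENNReal.ofReal ε := by
    intro ε hε
    obtain ⟨δ₁, hδ₁pos, hδ₁⟩ := hφunif ε hε
    have hlt : θ₀ < θ₀ + ENNReal.ofReal ε :=
      ENNReal.lt_add_right hθ₀ne (by simp [ENNReal.ofReal_pos, hε])
    have hev : ∀ᶠ r in 𝓝[>] (0 : ℝ),
        μ (closedBall x₀ r) / ENNReal.ofReal (r ^ k) ≤ θ₀ + ENNReal.ofReal ε :=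
      hθ₀.eventually (eventually_le_nhds hlt)
    obtain ⟨δ₂, hδ₂pos, hδ₂⟩ :=
      ((nhdsGT_basis (0 : ℝ)).eventually_iff).1 hev
    -- choose t
    set t : ℝ := min δ₁ δ₂ / 2 with ht_def
    have htpos : 0 < t := by positivity
    have htδ₁ : t < δ₁ := by
      have := min_le_left δ₁ δ₂; simp only [ht_def]; linarith [min_le_left δ₁ δ₂]
    have htδ₂ : t < δ₂ := by simp only [ht_def]; linarith [min_le_right δ₁ δ₂]
    -- choose t'
    have htk : (0:ℝ) < t ^ k := by positivity
    have hevt' : ∀ᶠ s in 𝓝[>] t, s < δ₂ ∧ s ^ k < t ^ k * (1 + ε) := by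
      have h1 : ∀ᶠ s in 𝓝 t, s < δ₂ := eventually_lt_nhds htδ₂
      have h2 : ∀ᶠ s in 𝓝 t, s ^ k < t ^ k * (1 + ε) := by
        have hc : ContinuousAt (fun s : ℝ => s ^ k) t := (continuous_pow k).continuousAt
        have : t ^ k < t ^ k * (1 + ε) := by nlinarith
        exact hc.eventually_lt continuousAt_const this
      exact ((h1.and h2).filter_mono nhdsWithin_le_nhds)
    obtain ⟨t', htt', ht'δ₂, ht'k⟩ :
        ∃ t', t < t' ∧ t' < δ₂ ∧ t' ^ k < t ^ k * (1 + ε) := by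
      rcases (hevt'.and self_mem_nhdsWithin).exists with ⟨s, ⟨h1, h2⟩, h3⟩
      exact ⟨s, h3, h1, h2⟩
    have ht'pos : 0 < t' := htpos.trans htt'
    -- Urysohn function
    set η : ℝ := (t' - t) / 2 with hη_def
    have hηpos : 0 < η := by simp only [hη_def]; linarith
    have hsub : closedBall x₀ (t + η) ⊆ ball x₀ t' := by
      apply closedBall_subset_ball; simp only [hη_def]; linarith
    obtain ⟨f, hf1, hf0, hfc, hf01⟩ :=
      exists_continuous_one_zero_of_isCompact (isCompact_closedBall x₀ (t + η))
        (isOpen_ball.isClosed_compl)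
        (disjoint_compl_right_iff_subset.2 hsub)
    have hweakf := hweak f f.continuous hfc
    -- eventual bound : θ j ≤ ofReal (∫ f dμ_j) / ofReal (t^k) + ofReal ε
    have hevθ : ∀ᶠ j in atTop, θ j ≤
        ENNReal.ofReal (∫ y, f y ∂(μseq j)) / ENNReal.ofReal (t ^ k) + ENNReal.ofReal ε := by
      filter_upwards [hx (ball_mem_nhds x₀ hηpos)] with j hj
      -- closedBall (x j) t ⊆ closedBall x₀ (t + η)
      have hball : closedBall (x j) t ⊆ closedBall x₀ (t + η) := by
        apply closedBall_subset_closedBall'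
        have : dist (x j) x₀ < η := mem_ball.1 hj
        linarith
      -- μseq j (closedBall (x j) t) ≤ ofReal ∫ f
      have hfinj : μseq j (closedBall (x j) t) ≠ ⊤ :=
        ((isCompact_closedBall _ _).measure_lt_top).ne
      have hintf : Integrable f (μseq j) :=
        f.continuous.integrable_of_hasCompactSupport hfc
      have hmeasle : μseq j (closedBall (x j) t) ≤
          ENNReal.ofReal (∫ y, f y ∂(μseq j)) := by
        have hind : Integrable ((closedBall (x j) t).indicator (1 : EuclideanSpace ℝ (Fin n) → ℝ)) (μseq j) := by
          rw [integrable_indicator_iff measurableSet_closedBall]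
          exact integrableOn_const ((isCompact_closedBall _ _).measure_lt_top).ne
        have hmono : ∀ y, (closedBall (x j) t).indicator (1 : EuclideanSpace ℝ (Fin n) → ℝ) y ≤ f y := by
          intro y
          by_cases hy : y ∈ closedBall (x j) t
          · rw [indicator_of_mem hy]
            have := hf1 (hball hy); simp only [Pi.one_apply] at this ⊢; rw [this]
          · rw [indicator_of_notMem hy]; exact (hf01 y).1
        have h1 : (μseq j (closedBall (x j) t)).toReal ≤ ∫ y, f y ∂(μseq j) := by
          rw [← measureReal_def, ← integral_indicator_one measurableSet_closedBall]
          exact integral_mono hind hintf hmono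
        calc μseq j (closedBall (x j) t)
            = ENNReal.ofReal ((μseq j (closedBall (x j) t)).toReal) :=
              (ENNReal.ofReal_toReal hfinj).symm
          _ ≤ ENNReal.ofReal (∫ y, f y ∂(μseq j)) := ENNReal.ofReal_le_ofReal h1
      -- θ j ≤ μseq j (closedBall (x j) t) / ofReal t^k + ofReal ε
      have hθj : θ j ≤ μseq j (closedBall (x j) t) / ENNReal.ofReal (t ^ k)
          + ENNReal.ofReal ε := by
        refine le_of_tendsto (hθ j) ?_
        have h1 : ∀ᶠ r in 𝓝[>] (0:ℝ), r < t :=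
          (eventually_lt_nhds htpos).filter_mono nhdsWithin_le_nhds
        filter_upwards [h1, self_mem_nhdsWithin] with r hrt hr
        refine (hmonoid j r t hr hrt).trans ?_
        exact add_le_add_right (ENNReal.ofReal_le_ofReal (hδ₁ j t htpos htδ₁)) _
      refine hθj.trans ?_
      exact add_le_add_left (ENNReal.div_le_div_right hmeasle _) _
    -- limit of the majorant
    have hlim : Tendsto (fun j => ENNReal.ofReal (∫ y, f y ∂(μseq j)) / ENNReal.ofReal (t ^ k)
        + ENNReal.ofReal ε) atTop
        (𝓝 (ENNReal.ofReal (∫ y, f y ∂μ) / ENNReal.ofReal (t ^ k) + ENNReal.ofReal ε)) := by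
      exact ((ENNReal.Tendsto.div_const (ENNReal.tendsto_ofReal hweakf)
        (Or.inr (ENNReal.ofReal_pos.2 htk).ne')).add tendsto_const_nhds)
    have hlimsup : limsup θ atTop ≤
        ENNReal.ofReal (∫ y, f y ∂μ) / ENNReal.ofReal (t ^ k) + ENNReal.ofReal ε := by
      calc limsup θ atTop
          ≤ limsup (fun j => ENNReal.ofReal (∫ y, f y ∂(μseq j)) / ENNReal.ofReal (t ^ k)
            + ENNReal.ofReal ε) atTop := limsup_le_limsup hevθ
        _ = _ := hlim.limsup_eq
    -- bound the limit
    have hμfin : μ (closedBall x₀ t') ≠ ⊤ := ((isCompact_closedBall _ _).measure_lt_top).ne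
    have hintfμ : Integrable f μ := f.continuous.integrable_of_hasCompactSupport hfc
    have hfμ : ENNReal.ofReal (∫ y, f y ∂μ) ≤ μ (closedBall x₀ t') := by
      have hind : Integrable ((closedBall x₀ t').indicator (1 : EuclideanSpace ℝ (Fin n) → ℝ)) μ := by
        rw [integrable_indicator_iff measurableSet_closedBall]
        exact integrableOn_const ((isCompact_closedBall _ _).measure_lt_top).ne
      have hmono : ∀ y, f y ≤ (closedBall x₀ t').indicator (1 : EuclideanSpace ℝ (Fin n) → ℝ) y := by
        intro y
        by_cases hy : y ∈ closedBall x₀ t'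
        · rw [indicator_of_mem hy]; exact (hf01 y).2
        · rw [indicator_of_notMem hy]
          have : y ∈ (ball x₀ t')ᶜ := fun h => hy (ball_subset_closedBall h)
          exact le_of_eq (hf0 this)
      have h1 : ∫ y, f y ∂μ ≤ (μ (closedBall x₀ t')).toReal := by
        rw [← measureReal_def, ← integral_indicator_one measurableSet_closedBall]
        exact integral_mono hintfμ hind hmono
      calc ENNReal.ofReal (∫ y, f y ∂μ)
          ≤ ENNReal.ofReal ((μ (closedBall x₀ t')).toReal) := ENNReal.ofReal_le_ofReal h1
        _ = μ (closedBall x₀ t') := ENNReal.ofReal_toReal hμfin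
    have ht'kpos : (0:ℝ) < t' ^ k := by positivity
    have hμt' : μ (closedBall x₀ t') ≤ (θ₀ + ENNReal.ofReal ε) * ENNReal.ofReal (t' ^ k) := by
      have h := hδ₂ ⟨htpos.trans htt', ht'δ₂⟩
      exact (ENNReal.div_le_iff (ENNReal.ofReal_pos.2 ht'kpos).ne' (by simp)).1 h
    refine hlimsup.trans ?_
    gcongr
    calc ENNReal.ofReal (∫ y, f y ∂μ) / ENNReal.ofReal (t ^ k)
        ≤ ((θ₀ + ENNReal.ofReal ε) * ENNReal.ofReal (t' ^ k)) / ENNReal.ofReal (t ^ k) := by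
          gcongr
          exact hfμ.trans hμt'
      _ = (θ₀ + ENNReal.ofReal ε) * (ENNReal.ofReal (t' ^ k) / ENNReal.ofReal (t ^ k)) :=
          by rw [mul_div_assoc]
      _ = (θ₀ + ENNReal.ofReal ε) * ENNReal.ofReal (t' ^ k / t ^ k) := by
          rw [ENNReal.ofReal_div_of_pos htk]
      _ ≤ (θ₀ + ENNReal.ofReal ε) * ENNReal.ofReal (1 + ε) :=
          mul_le_mul_right (ENNReal.ofReal_le_ofReal
            ((div_le_iff₀ htk).2 (by nlinarith [ht'k]))) _
  -- take ε → 0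
  have hF : Tendsto (fun ε : ℝ =>
      (θ₀ + ENNReal.ofReal ε) * ENNReal.ofReal (1 + ε) + ENNReal.ofReal ε)
      (𝓝[>] (0:ℝ)) (𝓝 θ₀) := by
    have hid : Tendsto (fun ε : ℝ => ε) (𝓝[>] (0:ℝ)) (𝓝 0) := nhdsWithin_le_nhds
    have h1 : Tendsto (fun ε : ℝ => ENNReal.ofReal ε) (𝓝[>] (0:ℝ)) (𝓝 0) := by
      simpa using ENNReal.tendsto_ofReal hid
    have h2 : Tendsto (fun ε : ℝ => θ₀ + ENNReal.ofReal ε) (𝓝[>] (0:ℝ)) (𝓝 θ₀) := by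
      simpa using (tendsto_const_nhds.add h1 : Tendsto _ _ (𝓝 (θ₀ + 0)))
    have h3 : Tendsto (fun ε : ℝ => ENNReal.ofReal (1 + ε)) (𝓝[>] (0:ℝ)) (𝓝 1) := by
      have : Tendsto (fun ε : ℝ => (1:ℝ) + ε) (𝓝[>] (0:ℝ)) (𝓝 1) := by
        simpa using (tendsto_const_nhds.add hid : Tendsto _ _ (𝓝 ((1:ℝ) + 0)))
      simpa using ENNReal.tendsto_ofReal this
    have h4 := ENNReal.Tendsto.mul h2 (Or.inr (by simp)) h3 (Or.inl one_ne_zero)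
    simpa using h4.add h1
  refine ge_of_tendsto hF ?_
  filter_upwards [self_mem_nhdsWithin] with ε hε
  exact key ε hε
end
end
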